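/- The ratio of the number of derangements on D_{k,l} to the number of permutations on D_{k,l} equals (Σ_{i=0}^{k} 1/(i!)^l)^{-1}. -/

import Mathlib

namespace Stmt9

variable {k l m : ℕ}

def shiftPerm (g : ZMod l → Equiv.Perm (Fin k)) : Equiv.Perm (Fin k × ZMod l) where
  toFun x := (g x.2 x.1, x.2 + 1)
  invFun x := ((g (x.2 - 1)).symm x.1, x.2 - 1)
  left_inv := by rintro ⟨i, j⟩; simp
  right_inv := by rintro ⟨i, j⟩; simp

lemma cardA (k l : ℕ) [NeZero l] :
    Nat.card {σ : Equiv.Perm (Fin k × ZMod l) // ∀ v, (σ v).2 = v.2 + 1} =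
      (Nat.factorial k) ^ l := by
  have hbij : Function.Bijective
      (fun g : ZMod l → Equiv.Perm (Fin k) =>
        (⟨shiftPerm g, fun v => rfl⟩ :
          {σ : Equiv.Perm (Fin k × ZMod l) // ∀ v, (σ v).2 = v.2 + 1})) := by
    constructor
    · intro g g' h
      funext j
      apply Equiv.ext; intro i
      have := congrArg (fun σ => (σ.1 (i, j)).1) h
      simpa [shiftPerm] using this
    · rintro ⟨σ, hσ⟩
      have hinj : ∀ j : ZMod l, Function.Injective (fun i : Fin k => (σ (i, j)).1) := by
        intro j i i' hii
        have : σ (i, j) = σ (i', j) := by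
          apply Prod.ext hii
          rw [hσ (i, j), hσ (i', j)]
        simpa using σ.injective this
      refine ⟨fun j => Equiv.ofBijective _ ((Fintype.bijective_iff_injective_and_card _).2
        ⟨hinj j, by simp⟩), ?_⟩
      ext ⟨i, j⟩
      · simp [shiftPerm, Equiv.ofBijective]
      · simpa [shiftPerm] using (hσ (i, j)).symm
  rw [Nat.card_congr (Equiv.ofBijective _ hbij).symm]
  simp [Nat.card_eq_fintype_card, Fintype.card_perm]

def bmap (S S' : {s : Finset (Fin k) // s.card = m}) (p : Equiv.Perm (Fin m)) :
    {x // x ∈ S.1} ≃ {x // x ∈ S'.1} :=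
  (S.1.orderIsoOfFin S.2).toEquiv.symm.trans
    (p.trans (S'.1.orderIsoOfFin S'.2).toEquiv)

def buildPerm (S : ZMod l → {s : Finset (Fin k) // s.card = m})
    (p : ZMod l → Equiv.Perm (Fin m)) : Equiv.Perm (Fin k × ZMod l) where
  toFun x := if h : x.1 ∈ (S x.2).1 then
      (((bmap (S x.2) (S (x.2 + 1)) (p x.2)) ⟨x.1, h⟩ : {y // y ∈ (S (x.2 + 1)).1}).1, x.2 + 1)
    else x
  invFun x := if h : x.1 ∈ (S x.2).1 then
      (((bmap (S (x.2 - 1)) (S x.2) (p (x.2 - 1))).symm ⟨x.1, h⟩).1, x.2 - 1)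
    else x
  left_inv := by
    rintro ⟨x, j⟩
    dsimp only
    by_cases h : x ∈ (S j).1
    · rw [dif_pos h]
      have hy := ((bmap (S j) (S (j + 1)) (p j)) ⟨x, h⟩).2
      rw [dif_pos hy]
      rw [show j + 1 - 1 = j from add_sub_cancel_right j 1]
      simp
    · rw [dif_neg h, dif_neg h]
  right_inv := by
    rintro ⟨x, j⟩
    dsimp only
    by_cases h : x ∈ (S j).1
    · rw [dif_pos h]
      have hy := ((bmap (S (j - 1)) (S j) (p (j - 1))).symm ⟨x, h⟩).2
      rw [dif_pos hy]
      rw [show j - 1 + 1 = j from sub_add_cancel j 1]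
      simp
    · rw [dif_neg h, dif_neg h]

lemma buildPerm_apply_mem (S : ZMod l → {s : Finset (Fin k) // s.card = m})
    (p : ZMod l → Equiv.Perm (Fin m)) {x : Fin k} {j : ZMod l} (h : x ∈ (S j).1) :
    buildPerm S p (x, j) =
      (((bmap (S j) (S (j + 1)) (p j)) ⟨x, h⟩).1, j + 1) := by
  simp [buildPerm, dif_pos h]

lemma buildPerm_apply_not_mem (S : ZMod l → {s : Finset (Fin k) // s.card = m})
    (p : ZMod l → Equiv.Perm (Fin m)) {x : Fin k} {j : ZMod l} (h : x ∉ (S j).1) :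
    buildPerm S p (x, j) = (x, j) := by
  simp [buildPerm, dif_neg h]

/-- The combinatorial data parametrizing permutations of `D_{k,l}`. -/
abbrev MData (k l : ℕ) : Type :=
  Σ m : Fin (k + 1), (ZMod l → {s : Finset (Fin k) // s.card = m.1}) ×
    (ZMod l → Equiv.Perm (Fin m.1))

def bigMap (k l : ℕ) (d : MData k l) :
    {σ : Equiv.Perm (Fin k × ZMod l) // ∀ v, σ v = v ∨ (σ v).2 = v.2 + 1} := by
  refine ⟨buildPerm d.2.1 d.2.2, ?_⟩
  rintro ⟨x, j⟩
  by_cases h : x ∈ (d.2.1 j).1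
  · right
    rw [buildPerm_apply_mem _ _ h]
  · left
    exact buildPerm_apply_not_mem _ _ h

lemma mem_iff_snd (hne : ∀ j : ZMod l, j + 1 ≠ j)
    (S : ZMod l → {s : Finset (Fin k) // s.card = m})
    (p : ZMod l → Equiv.Perm (Fin m)) (x : Fin k) (j : ZMod l) :
    x ∈ (S j).1 ↔ ((buildPerm S p) (x, j)).2 = j + 1 := by
  by_cases h : x ∈ (S j).1
  · simp [h, buildPerm_apply_mem _ _ h]
  · simp [h, buildPerm_apply_not_mem _ _ h, Ne.symm (hne j)]

lemma bigMap_bijective (k l : ℕ) [NeZero l] (hl : 2 ≤ l) :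
    Function.Bijective (bigMap k l) := by
  have hone : (1 : ZMod l) ≠ 0 := by
    haveI : Fact (1 < l) := ⟨hl⟩
    exact one_ne_zero
  have hne : ∀ j : ZMod l, j + 1 ≠ j := fun j h => hone (by simpa using h)
  constructor
  · rintro ⟨⟨m, hm⟩, S, p⟩ ⟨⟨m', hm'⟩, S', p'⟩ hdd
    have hσ : buildPerm S p = buildPerm S' p' := congrArg Subtype.val hdd
    have hS : ∀ j, (S j).1 = (S' j).1 := by
      intro j
      ext x
      rw [mem_iff_snd hne S p x j, mem_iff_snd hne S' p' x j, hσ]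
    obtain rfl : m = m' := by
      have h1 := (S 0).2
      have h2 := (S' 0).2
      rw [hS 0] at h1
      exact h1.symm.trans h2
    obtain rfl : S = S' := funext fun j => Subtype.ext (hS j)
    obtain rfl : p = p' := by
      funext j
      apply Equiv.ext
      intro a
      set x : {y // y ∈ (S j).1} := (S j).1.orderIsoOfFin (S j).2 a with hx
      have h1 := buildPerm_apply_mem S p x.2
      have h2 := buildPerm_apply_mem S p' x.2
      rw [hσ] at h1
      have : ((bmap (S j) (S (j + 1)) (p j)) ⟨x.1, x.2⟩).1 =
          ((bmap (S j) (S (j + 1)) (p' j)) ⟨x.1, x.2⟩).1 := by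
        have := h1.symm.trans h2
        exact (Prod.ext_iff.mp this).1
      have hsub : (bmap (S j) (S (j + 1)) (p j)) x = (bmap (S j) (S (j + 1)) (p' j)) x :=
        Subtype.ext this
      simp only [bmap, Equiv.trans_apply] at hsub
      have := ((S (j + 1)).1.orderIsoOfFin (S (j + 1)).2).toEquiv.injective hsub
      simpa [hx] using this
    rfl
  · rintro ⟨σ, hσ⟩
    classical
    set S : ZMod l → Finset (Fin k) :=
      fun j => Finset.univ.filter (fun x => σ (x, j) ≠ (x, j)) with hSdef
    have hmemS : ∀ j x, x ∈ S j ↔ σ (x, j) ≠ (x, j) := by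
      intro j x; simp [hSdef]
    have hsnd : ∀ j x, x ∈ S j → σ (x, j) = ((σ (x, j)).1, j + 1) := by
      intro j x hx
      rcases hσ (x, j) with h | h
      · exact absurd h ((hmemS j x).1 hx)
      · exact Prod.ext rfl h
    have hfst : ∀ j x, x ∈ S j → (σ (x, j)).1 ∈ S (j + 1) := by
      intro j x hx
      rw [hmemS]
      intro hfix
      have : σ ((σ (x, j)).1, j + 1) = σ (x, j) := by
        rw [hfix]; exact (hsnd j x hx).symm
      have := σ.injective this
      have := congrArg Prod.snd this
      exact hne j this
    -- the bijection between consecutive moved sets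
    have hbij : ∀ j : ZMod l, Function.Bijective
        (fun y : {y // y ∈ S j} => (⟨(σ (y.1, j)).1, hfst j y.1 y.2⟩ : {y // y ∈ S (j + 1)})) := by
      intro j
      constructor
      · rintro ⟨x, hx⟩ ⟨x', hx'⟩ hxx
        have : σ (x, j) = σ (x', j) := by
          rw [hsnd j x hx, hsnd j x' hx']
          exact Prod.ext (congrArg Subtype.val hxx) rfl
        have := σ.injective this
        exact Subtype.ext (congrArg Prod.fst this)
      · rintro ⟨y, hy⟩
        set w := σ.symm (y, j + 1) with hw
        have hσw : σ w = (y, j + 1) := σ.apply_symm_apply (y, j + 1)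
        have hwne : w ≠ (y, j + 1) := by
          intro hcon
          rw [hcon] at hσw
          exact (hmemS (j + 1) y).1 hy hσw
        have hw2 : w.2 = j := by
          rcases hσ w with h | h
          · exact absurd (h.symm.trans hσw) hwne
          · have : j + 1 = w.2 + 1 := by rw [← h, hσw]
            exact (add_left_injective 1 this).symm
        have hval : σ (w.1, j) = (y, j + 1) := by
          rw [show (w.1, j) = w from (Prod.ext rfl hw2.symm)]; exact hσw
        have hwmem : w.1 ∈ S j := by
          rw [hmemS]
          intro hcon
          exact hne j (congrArg Prod.snd (hcon.symm.trans hval)).symm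
        refine ⟨⟨w.1, hwmem⟩, ?_⟩
        apply Subtype.ext
        show (σ (w.1, j)).1 = y
        rw [hval]
    have hcard_step : ∀ j : ZMod l, (S (j + 1)).card = (S j).card := by
      intro j
      rw [← Fintype.card_coe, ← Fintype.card_coe]
      exact (Fintype.card_congr (Equiv.ofBijective _ (hbij j))).symm
    have hcard_const : ∀ j : ZMod l, (S j).card = (S 0).card := by
      have hnat : ∀ n : ℕ, (S (n : ZMod l)).card = (S 0).card := by
        intro n
        induction n with
        | zero => simp
        | succ n ih => push_cast; rw [hcard_step]; exact_mod_cast ih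
      intro j
      obtain ⟨n, rfl⟩ := ZMod.natCast_zmod_surjective (n := l) j
      exact hnat n
    set m : ℕ := (S 0).card with hmdef
    have hmlt : m < k + 1 :=
      Nat.lt_succ_of_le (le_trans (Finset.card_filter_le _ _) (by simp))
    set Sd : ZMod l → {s : Finset (Fin k) // s.card = m} :=
      fun j => ⟨S j, hcard_const j⟩ with hSd
    set pd : ZMod l → Equiv.Perm (Fin m) := fun j =>
      ((S j).orderIsoOfFin (hcard_const j)).toEquiv.trans
        ((Equiv.ofBijective _ (hbij j)).trans
          ((S (j + 1)).orderIsoOfFin (hcard_const (j + 1))).toEquiv.symm) with hpd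
    refine ⟨⟨⟨m, hmlt⟩, Sd, pd⟩, ?_⟩
    apply Subtype.ext
    apply Equiv.ext
    rintro ⟨x, j⟩
    show buildPerm Sd pd (x, j) = σ (x, j)
    by_cases h : x ∈ S j
    · rw [buildPerm_apply_mem Sd pd (h : x ∈ (Sd j).1)]
      have : ((bmap (Sd j) (Sd (j + 1)) (pd j)) ⟨x, h⟩).1 = (σ (x, j)).1 := by
        simp only [bmap, hpd, Equiv.trans_apply]
        rw [Equiv.apply_symm_apply, Equiv.apply_symm_apply]
        rfl
      rw [this]
      exact (hsnd j x h).symm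
    · rw [buildPerm_apply_not_mem Sd pd (h : x ∉ (Sd j).1)]
      by_contra hcon
      exact h ((hmemS j x).2 fun e => hcon e.symm)

lemma cardB (k l : ℕ) [NeZero l] (hl : 2 ≤ l) :
    Nat.card {σ : Equiv.Perm (Fin k × ZMod l) // ∀ v, σ v = v ∨ (σ v).2 = v.2 + 1} =
      ∑ m ∈ Finset.range (k + 1), (Nat.choose k m * Nat.factorial m) ^ l := by
  classical
  rw [← Nat.card_congr (Equiv.ofBijective _ (bigMap_bijective k l hl))]
  rw [Nat.card_eq_fintype_card]
  rw [Fintype.card_sigma]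
  rw [← Fin.sum_univ_eq_sum_range]
  congr 1
  funext i
  rw [Fintype.card_prod, Fintype.card_fun, Fintype.card_fun,
    Fintype.card_finset_len, Fintype.card_perm, ZMod.card, Fintype.card_fin,
    Fintype.card_fin, mul_pow]

end Stmt9

open Stmt9 in
/-- The derangement-to-permutation ratio of `D_{k,l}` equals `(∑_{i=0}^k 1/(i!)^l)⁻¹`. -/
theorem stmt_9 (k l : ℕ) (hk : 1 ≤ k) (hl : 2 ≤ l) :
    ({σ : Equiv.Perm (Fin k × ZMod l) | ∀ v, (σ v).2 = v.2 + 1}.ncard : ℚ) /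
      ({σ : Equiv.Perm (Fin k × ZMod l) | ∀ v, σ v = v ∨ (σ v).2 = v.2 + 1}.ncard : ℚ) =
      (∑ i ∈ Finset.range (k + 1), (1 : ℚ) / (Nat.factorial i) ^ l)⁻¹ := by
  haveI : NeZero l := ⟨by omega⟩
  rw [← Nat.card_coe_set_eq, ← Nat.card_coe_set_eq]
  have h1 : Nat.card ↥{σ : Equiv.Perm (Fin k × ZMod l) | ∀ v, (σ v).2 = v.2 + 1} =
      Nat.factorial k ^ l := cardA k l
  have h2 : Nat.card ↥{σ : Equiv.Perm (Fin k × ZMod l) | ∀ v, σ v = v ∨ (σ v).2 = v.2 + 1} =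
      ∑ m ∈ Finset.range (k + 1), (Nat.choose k m * Nat.factorial m) ^ l := cardB k l hl
  rw [h1, h2]
  have hfac : ∀ n : ℕ, ((Nat.factorial n : ℚ)) ≠ 0 := fun n => by
    exact_mod_cast Nat.factorial_ne_zero n
  have key : ((∑ m ∈ Finset.range (k + 1), (Nat.choose k m * Nat.factorial m) ^ l : ℕ) : ℚ) =
      (Nat.factorial k : ℚ) ^ l * ∑ i ∈ Finset.range (k + 1), (1 : ℚ) / (Nat.factorial i) ^ l := by
    push_cast
    rw [Finset.mul_sum, ← Finset.sum_range_reflect]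
    apply Finset.sum_congr rfl
    intro i hi
    have hik : i ≤ k := Nat.lt_succ_iff.mp (Finset.mem_range.mp hi)
    have e1 : k.choose (k - i) = k.choose i := Nat.choose_symm hik
    have e2 : ((k.choose i : ℚ) * Nat.factorial (k - i)) = Nat.factorial k / Nat.factorial i := by
      rw [eq_div_iff (hfac i)]
      have := Nat.choose_mul_factorial_mul_factorial hik
      push_cast [← this]
      ring
    rw [show k + 1 - 1 - i = k - i from by omega, e1, e2, div_pow]
    rw [div_eq_mul_one_div]
  rw [key, Nat.cast_pow, div_mul_cancel_left₀ (pow_ne_zero l (hfac k))]
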